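/- Let r be the reflection of R^3 in a coordinate plane (p ↦ p − 2(p·w)w for a unit coordinate vector w). For any tiling t of a region R and any u ∈ {±e_x, ±e_y, ±e_z}, the pretwist of the reflected tiling satisfies T^u(r(t)) = −T^u(t). -/
import Mathlib


open scoped Classical

noncomputable section

/-- The closed unit (basic) cube with minimal corner `x ∈ ℤ³`. -/
def cube (x : Fin 3 → ℤ) : Set (Fin 3 → ℝ) :=
  {p | ∀ i, (x i : ℝ) ≤ p i ∧ p i ≤ (x i : ℝ) + 1}

/-- A domino is encoded as an ordered pair of cells (minimal corners):
first the white cell, then the black cell.  Its underlying point set: -/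
def dominoSet (d : (Fin 3 → ℤ) × (Fin 3 → ℤ)) : Set (Fin 3 → ℝ) :=
  cube d.1 ∪ cube d.2

/-- `v(d)`: the vector from the center of the white cube of `d` to the center of
its black cube. -/
def vvec (d : (Fin 3 → ℤ) × (Fin 3 → ℤ)) : Fin 3 → ℝ :=
  fun i => (d.2 i : ℝ) - (d.1 i : ℝ)

/-- The open `u`-shade of a set `X`: the interior of `(X + [0,∞)·u) \ X`. -/
def shade (u : Fin 3 → ℝ) (X : Set (Fin 3 → ℝ)) : Set (Fin 3 → ℝ) :=
  interior ({p | ∃ x ∈ X, ∃ s : ℝ, 0 ≤ s ∧ p = x + s • u} \ X)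

/-- The effect `τ^u(d0,d1)`: `(1/4)·det(v(d1), v(d0), u)` if `d1` meets the open
`u`-shade of `d0`, and `0` otherwise. -/
def effect (u : Fin 3 → ℝ) (d0 d1 : (Fin 3 → ℤ) × (Fin 3 → ℤ)) : ℝ :=
  if (dominoSet d1 ∩ shade u (dominoSet d0)).Nonempty then
    (1 / 4) * (Matrix.of ![vvec d1, vvec d0, u]).det
  else 0

/-- The `u`-pretwist `T^u(t) = Σ_{d0,d1 ∈ t} τ^u(d0,d1)`. -/
def pretwist (u : Fin 3 → ℝ) (t : Finset ((Fin 3 → ℤ) × (Fin 3 → ℤ))) : ℝ :=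
  ∑ d0 ∈ t, ∑ d1 ∈ t, effect u d0 d1

/-- `d` is a domino: its two cells are face-adjacent, the first cell being white
(even coordinate sum) and hence the second black. -/
def IsDomino (d : (Fin 3 → ℤ) × (Fin 3 → ℤ)) : Prop :=
  (∑ i, |d.1 i - d.2 i|) = 1 ∧ Even (∑ i, d.1 i)

/-- `t` is a tiling of the region `R` (a finite set of cells) by dominoes. -/
def IsTiling (R : Finset (Fin 3 → ℤ)) (t : Finset ((Fin 3 → ℤ) × (Fin 3 → ℤ))) : Prop :=
  (∀ d ∈ t, IsDomino d ∧ d.1 ∈ R ∧ d.2 ∈ R) ∧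
  (∀ x ∈ R, ∃! d, d ∈ t ∧ (x = d.1 ∨ x = d.2))


/-- Reflection of a cell in the coordinate plane `w^⊥` where `w = e_j`
(`p ↦ p − 2(p·w)w` on points; on minimal corners of cubes, the `j`-th coordinate
`x j` becomes `−x j − 1`). -/
def reflCell (j : Fin 3) (x : Fin 3 → ℤ) : Fin 3 → ℤ :=
  Function.update x j (-(x j) - 1)

/-- Reflection of a domino: cells are reflected, and since the reflection exchanges
colors, the white and black cells are swapped. -/
def reflDomino (j : Fin 3) (d : (Fin 3 → ℤ) × (Fin 3 → ℤ)) :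
    (Fin 3 → ℤ) × (Fin 3 → ℤ) :=
  (reflCell j d.2, reflCell j d.1)

def Adj (d : (Fin 3 → ℤ) × (Fin 3 → ℤ)) : Prop := (∑ i, |d.1 i - d.2 i|) = 1
def dlo (d : (Fin 3 → ℤ) × (Fin 3 → ℤ)) (k : Fin 3) : ℤ := min (d.1 k) (d.2 k)
def dhi (d : (Fin 3 → ℤ) × (Fin 3 → ℤ)) (k : Fin 3) : ℤ := max (d.1 k) (d.2 k) + 1

lemma dlo_lt_dhi (d : (Fin 3 → ℤ) × (Fin 3 → ℤ)) (k : Fin 3) : dlo d k < dhi d k := by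
  unfold dlo dhi; omega

def dswap (d : (Fin 3 → ℤ) × (Fin 3 → ℤ)) : (Fin 3 → ℤ) × (Fin 3 → ℤ) := (d.2, d.1)

lemma dominoSet_dswap (d : (Fin 3 → ℤ) × (Fin 3 → ℤ)) : dominoSet (dswap d) = dominoSet d :=
  Set.union_comm _ _
lemma dlo_dswap (d : (Fin 3 → ℤ) × (Fin 3 → ℤ)) : dlo (dswap d) = dlo d := by
  funext k; simp only [dlo, dswap]; omega
lemma dhi_dswap (d : (Fin 3 → ℤ) × (Fin 3 → ℤ)) : dhi (dswap d) = dhi d := by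
  funext k; simp only [dhi, dswap]; omega

lemma adj_sum3 {d : (Fin 3 → ℤ) × (Fin 3 → ℤ)} (hd : Adj d) :
    (d.1 0 - d.2 0).natAbs + (d.1 1 - d.2 1).natAbs + (d.1 2 - d.2 2).natAbs = 1 := by
  have h := hd
  unfold Adj at h
  rw [Fin.sum_univ_three, Int.abs_eq_natAbs, Int.abs_eq_natAbs, Int.abs_eq_natAbs] at h
  omega

lemma exists_dir {d : (Fin 3 → ℤ) × (Fin 3 → ℤ)} (hd : Adj d) :
    ∃ i0 : Fin 3, (∀ k, k ≠ i0 → d.1 k = d.2 k) ∧ (d.1 i0 - d.2 i0).natAbs = 1 := by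
  have h := adj_sum3 hd
  have : ((d.1 0 = d.2 0 ∧ d.1 1 = d.2 1 ∧ (d.1 2 - d.2 2).natAbs = 1) ∨
      (d.1 0 = d.2 0 ∧ (d.1 1 - d.2 1).natAbs = 1 ∧ d.1 2 = d.2 2) ∨
      ((d.1 0 - d.2 0).natAbs = 1 ∧ d.1 1 = d.2 1 ∧ d.1 2 = d.2 2)) := by omega
  rcases this with ⟨h0, h1, h2⟩ | ⟨h0, h1, h2⟩ | ⟨h0, h1, h2⟩
  · exact ⟨2, fun k hk => by fin_cases k <;> simp_all, h2⟩
  · exact ⟨1, fun k hk => by fin_cases k <;> simp_all, h1⟩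
  · exact ⟨0, fun k hk => by fin_cases k <;> simp_all, h0⟩

lemma cell_of_between {d : (Fin 3 → ℤ) × (Fin 3 → ℤ)} (hd : Adj d) (m : Fin 3 → ℤ)
    (h : ∀ k, dlo d k ≤ m k ∧ m k < dhi d k) : m = d.1 ∨ m = d.2 := by
  have h0 := h 0; have h1 := h 1; have h2 := h 2
  unfold dlo dhi at h0 h1 h2
  have hs := adj_sum3 hd
  have : (m 0 = d.1 0 ∧ m 1 = d.1 1 ∧ m 2 = d.1 2) ∨
      (m 0 = d.2 0 ∧ m 1 = d.2 1 ∧ m 2 = d.2 2) := by omega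
  rcases this with ⟨e0, e1, e2⟩ | ⟨e0, e1, e2⟩
  · left; funext k; fin_cases k <;> assumption
  · right; funext k; fin_cases k <;> assumption

/-- auxiliary: oriented version of the box membership, d.2 i0 = d.1 i0 + 1. -/
lemma mem_dominoSet_aux {d : (Fin 3 → ℤ) × (Fin 3 → ℤ)} {i0 : Fin 3}
    (heq : ∀ k, k ≠ i0 → d.1 k = d.2 k) (h2 : d.2 i0 = d.1 i0 + 1) (p : Fin 3 → ℝ)
    (h : ∀ k, (dlo d k : ℝ) ≤ p k ∧ p k ≤ (dhi d k : ℝ)) : p ∈ dominoSet d := by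
  have hlo : ∀ k, dlo d k = d.1 k := by
    intro k; rcases eq_or_ne k i0 with rfl | hk
    · unfold dlo; omega
    · have := heq k hk; unfold dlo; omega
  have hhi : ∀ k, dhi d k = d.2 k + 1 := by
    intro k; rcases eq_or_ne k i0 with rfl | hk
    · unfold dhi; omega
    · have := heq k hk; unfold dhi; omega
  have h' : ∀ k, (d.1 k : ℝ) ≤ p k ∧ p k ≤ (d.2 k : ℝ) + 1 := by
    intro k
    have := h k
    rw [hlo k, hhi k] at this
    push_cast at this
    exact this
  by_cases hc : p i0 ≤ (d.1 i0 : ℝ) + 1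
  · left
    intro k
    by_cases hk : k = i0
    · subst hk; exact ⟨(h' k).1, hc⟩
    · have e : (d.2 k : ℝ) = (d.1 k : ℝ) := by exact_mod_cast (heq k hk).symm
      exact ⟨(h' k).1, by have := (h' k).2; linarith⟩
  · right
    intro k
    by_cases hk : k = i0
    · subst hk
      have c2 : (d.2 k : ℝ) = (d.1 k : ℝ) + 1 := by exact_mod_cast h2
      push_neg at hc
      exact ⟨by linarith, (h' k).2⟩
    · have e : (d.2 k : ℝ) = (d.1 k : ℝ) := by exact_mod_cast (heq k hk).symm
      exact ⟨by rw [e]; exact (h' k).1, (h' k).2⟩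

lemma mem_dominoSet {d : (Fin 3 → ℤ) × (Fin 3 → ℤ)} (hd : Adj d) (p : Fin 3 → ℝ) :
    p ∈ dominoSet d ↔ ∀ k, (dlo d k : ℝ) ≤ p k ∧ p k ≤ (dhi d k : ℝ) := by
  constructor
  · rintro (h | h) <;> intro k <;> have hk := h k
    · have l1 : dlo d k ≤ d.1 k := min_le_left _ _
      have l2 : d.1 k + 1 ≤ dhi d k := by unfold dhi; omega
      exact ⟨le_trans (by exact_mod_cast l1) hk.1,
        le_trans hk.2 (by exact_mod_cast l2)⟩
    · have l1 : dlo d k ≤ d.2 k := min_le_right _ _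
      have l2 : d.2 k + 1 ≤ dhi d k := by unfold dhi; omega
      exact ⟨le_trans (by exact_mod_cast l1) hk.1,
        le_trans hk.2 (by exact_mod_cast l2)⟩
  · intro h
    obtain ⟨i0, heq, hpm⟩ := exists_dir hd
    have : d.2 i0 = d.1 i0 + 1 ∨ d.1 i0 = d.2 i0 + 1 := by omega
    rcases this with h2 | h2
    · exact mem_dominoSet_aux heq h2 p h
    · have := mem_dominoSet_aux (d := dswap d) (i0 := i0)
        (fun k hk => (heq k hk).symm) h2 p
        (by rw [dlo_dswap, dhi_dswap]; exact h)
      rwa [dominoSet_dswap] at this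

lemma dominoSet_eq_pi {d : (Fin 3 → ℤ) × (Fin 3 → ℤ)} (hd : Adj d) :
    dominoSet d = Set.pi Set.univ (fun k => Set.Icc ((dlo d k : ℝ)) ((dhi d k : ℝ))) := by
  ext p
  rw [mem_dominoSet hd]
  simp [Set.mem_pi, Set.mem_Icc, Pi.le_def, forall_and]


lemma Icc_inter_Ioi_nonempty {c d b : ℝ} (hcd : c < d) :
    (Set.Icc c d ∩ Set.Ioi b).Nonempty ↔ b < d := by
  constructor
  · rintro ⟨x, ⟨h1, h2⟩, h3⟩
    simp only [Set.mem_Ioi] at h3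
    linarith
  · intro hbd
    refine ⟨(max c b + d) / 2, ⟨?_, ?_⟩, ?_⟩
    · have := le_max_left c b; linarith [max_lt hcd hbd]
    · have : max c b < d := max_lt hcd hbd; linarith
    · have h1 : max c b < d := max_lt hcd hbd
      have := le_max_right c b
      exact Set.mem_Ioi.mpr (by linarith)

lemma Icc_inter_Iio_nonempty {c d a : ℝ} (hcd : c < d) :
    (Set.Icc c d ∩ Set.Iio a).Nonempty ↔ c < a := by
  constructor
  · rintro ⟨x, ⟨h1, h2⟩, h3⟩
    simp only [Set.mem_Iio] at h3
    linarith
  · intro hca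
    refine ⟨(c + min d a) / 2, ⟨?_, ?_⟩, ?_⟩
    · have : c < min d a := lt_min hcd hca; linarith
    · have := min_le_left d a; linarith [lt_min hcd hca]
    · have := min_le_right d a
      exact Set.mem_Iio.mpr (by linarith [lt_min hcd hca])

lemma Icc_inter_Ioo_nonempty {c d a b : ℝ} (hcd : c < d) (hab : a < b) :
    (Set.Icc c d ∩ Set.Ioo a b).Nonempty ↔ a < d ∧ c < b := by
  constructor
  · rintro ⟨x, ⟨h1, h2⟩, h3, h4⟩
    exact ⟨by linarith, by linarith⟩
  · rintro ⟨had, hcb⟩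
    have h1 : max a c < b := max_lt hab hcb
    have h2 : max a c < d := max_lt had hcd
    have h3 : max a c < min b d := lt_min h1 h2
    refine ⟨(max a c + min b d) / 2, ⟨?_, ?_⟩, ?_, ?_⟩
    · have := le_max_right a c; have := min_le_left b d
      linarith [min_le_right b d]
    · have := min_le_right b d; linarith
    · have := le_max_left a c; linarith
    · have := min_le_left b d; linarith

lemma mem_pi_ite {i : Fin 3} (S : Fin 3 → Set ℝ) (A : Set ℝ) (p : Fin 3 → ℝ) :
    (p ∈ Set.pi Set.univ fun k => if k = i then A else S k) ↔
      (p i ∈ A ∧ ∀ k, k ≠ i → p k ∈ S k) := by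
  simp only [Set.mem_pi, Set.mem_univ, true_implies]
  constructor
  · intro h
    refine ⟨by have := h i; rwa [if_pos rfl] at this,
      fun k hk => by have := h k; rwa [if_neg hk] at this⟩
  · rintro ⟨h1, h2⟩ k
    by_cases hk : k = i
    · subst hk; rwa [if_pos rfl]
    · rw [if_neg hk]; exact h2 k hk

/-- The cone-minus-box computation, positive direction. -/
lemma shade_box_pos (i : Fin 3) (a b : Fin 3 → ℝ) (hab : ∀ k, a k < b k) :
    shade (Pi.single i 1) (Set.pi Set.univ fun k => Set.Icc (a k) (b k)) =
      Set.pi Set.univ (fun k => if k = i then Set.Ioi (b i) else Set.Ioo (a k) (b k)) := by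
  have hadd : ∀ (x : Fin 3 → ℝ) (s : ℝ) (m : Fin 3),
      (x + s • (Pi.single i 1 : Fin 3 → ℝ)) m = x m + s * (if m = i then 1 else 0) := by
    intro x s m; simp [Pi.single_apply]
  have hstep : {p : Fin 3 → ℝ | ∃ x ∈ (Set.pi Set.univ fun k => Set.Icc (a k) (b k)),
        ∃ s : ℝ, 0 ≤ s ∧ p = x + s • (Pi.single i 1 : Fin 3 → ℝ)} \
        (Set.pi Set.univ fun k => Set.Icc (a k) (b k)) =
      Set.pi Set.univ (fun k => if k = i then Set.Ioi (b i) else Set.Icc (a k) (b k)) := by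
    ext p
    rw [Set.mem_diff, mem_pi_ite, Set.mem_Ioi]
    simp only [Set.mem_setOf_eq, Set.mem_pi, Set.mem_univ, true_implies, Set.mem_Icc]
    constructor
    · rintro ⟨⟨x, hx, s, hs, rfl⟩, hnx⟩
      constructor
      · rw [hadd]
        simp only [eq_self_iff_true, if_true, mul_one]
        by_contra hle
        push_neg at hle
        apply hnx
        intro m
        rw [hadd]
        by_cases hm : m = i
        · subst hm
          simp only [eq_self_iff_true, if_true, mul_one]
          exact ⟨by linarith [(hx m).1], hle⟩
        · simp only [if_neg hm, mul_zero, add_zero]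
          exact hx m
      · intro k hk
        rw [hadd]
        simp only [if_neg hk, mul_zero, add_zero]
        exact hx k
    · rintro ⟨h1, h2⟩
      constructor
      · refine ⟨Function.update p i (a i), ?_, p i - a i, ?_, ?_⟩
        · intro k
          by_cases hk : k = i
          · subst hk; simp only [Function.update_self]
            exact ⟨le_refl _, le_of_lt (hab k)⟩
          · rw [Function.update_of_ne hk]
            exact h2 k hk
        · have := hab i; linarith
        · funext m
          rw [hadd]
          by_cases hm : m = i
          · subst hm
            simp only [Function.update_self, eq_self_iff_true, if_true, mul_one]
            ring
          · simp only [Function.update_of_ne hm, if_neg hm, mul_zero, add_zero]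
      · intro hX
        have := (hX i).2
        linarith
  unfold shade
  rw [hstep, interior_pi_set Set.finite_univ]
  apply congrArg (Set.pi Set.univ)
  funext k
  by_cases hk : k = i
  · subst hk; rw [if_pos rfl, if_pos rfl, interior_Ioi]
  · rw [if_neg hk, if_neg hk, interior_Icc]

/-- The cone-minus-box computation, negative direction. -/
lemma shade_box_neg (i : Fin 3) (a b : Fin 3 → ℝ) (hab : ∀ k, a k < b k) :
    shade (-Pi.single i 1) (Set.pi Set.univ fun k => Set.Icc (a k) (b k)) =
      Set.pi Set.univ (fun k => if k = i then Set.Iio (a i) else Set.Ioo (a k) (b k)) := by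
  have hadd : ∀ (x : Fin 3 → ℝ) (s : ℝ) (m : Fin 3),
      (x + s • (-Pi.single i 1 : Fin 3 → ℝ)) m = x m - s * (if m = i then 1 else 0) := by
    intro x s m; simp [Pi.single_apply]; ring
  have hstep : {p : Fin 3 → ℝ | ∃ x ∈ (Set.pi Set.univ fun k => Set.Icc (a k) (b k)),
        ∃ s : ℝ, 0 ≤ s ∧ p = x + s • (-Pi.single i 1 : Fin 3 → ℝ)} \
        (Set.pi Set.univ fun k => Set.Icc (a k) (b k)) =
      Set.pi Set.univ (fun k => if k = i then Set.Iio (a i) else Set.Icc (a k) (b k)) := by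
    ext p
    rw [Set.mem_diff, mem_pi_ite, Set.mem_Iio]
    simp only [Set.mem_setOf_eq, Set.mem_pi, Set.mem_univ, true_implies, Set.mem_Icc]
    constructor
    · rintro ⟨⟨x, hx, s, hs, rfl⟩, hnx⟩
      constructor
      · rw [hadd]
        simp only [eq_self_iff_true, if_true, mul_one]
        by_contra hle
        push_neg at hle
        apply hnx
        intro m
        rw [hadd]
        by_cases hm : m = i
        · subst hm
          simp only [eq_self_iff_true, if_true, mul_one]
          exact ⟨hle, by linarith [(hx m).2]⟩
        · simp only [if_neg hm, mul_zero, sub_zero]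
          exact hx m
      · intro k hk
        rw [hadd]
        simp only [if_neg hk, mul_zero, sub_zero]
        exact hx k
    · rintro ⟨h1, h2⟩
      constructor
      · refine ⟨Function.update p i (b i), ?_, b i - p i, ?_, ?_⟩
        · intro k
          by_cases hk : k = i
          · subst hk; simp only [Function.update_self]
            exact ⟨le_of_lt (hab k), le_refl _⟩
          · rw [Function.update_of_ne hk]
            exact h2 k hk
        · have := hab i; linarith
        · funext m
          rw [hadd]
          by_cases hm : m = i
          · subst hm
            simp only [Function.update_self, eq_self_iff_true, if_true, mul_one]
            ring
          · simp only [Function.update_of_ne hm, if_neg hm, mul_zero, sub_zero]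
      · intro hX
        have := (hX i).1
        linarith
  unfold shade
  rw [hstep, interior_pi_set Set.finite_univ]
  apply congrArg (Set.pi Set.univ)
  funext k
  by_cases hk : k = i
  · subst hk; rw [if_pos rfl, if_pos rfl, interior_Iio]
  · rw [if_neg hk, if_neg hk, interior_Icc]

/-- the "overlap away from i" condition -/
def ov (i : Fin 3) (d0 d1 : (Fin 3 → ℤ) × (Fin 3 → ℤ)) : Prop :=
  ∀ k, k ≠ i → dlo d0 k < dhi d1 k ∧ dlo d1 k < dhi d0 k

lemma ov_symm {i : Fin 3} {d0 d1} : ov i d0 d1 ↔ ov i d1 d0 := by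
  unfold ov; constructor <;> intro h k hk <;> exact (h k hk).symm

lemma shadeNE_pos (i : Fin 3) {d0 d1} (h0 : Adj d0) (h1 : Adj d1) :
    (dominoSet d1 ∩ shade (Pi.single i 1) (dominoSet d0)).Nonempty ↔
      ov i d0 d1 ∧ dhi d0 i < dhi d1 i := by
  have hab : ∀ k, ((dlo d0 k : ℝ)) < ((dhi d0 k : ℝ)) := fun k => by
    exact_mod_cast dlo_lt_dhi d0 k
  have hcd : ∀ k, ((dlo d1 k : ℝ)) < ((dhi d1 k : ℝ)) := fun k => by
    exact_mod_cast dlo_lt_dhi d1 k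
  rw [dominoSet_eq_pi h1, dominoSet_eq_pi h0, shade_box_pos i _ _ hab,
    ← Set.pi_inter_distrib, Set.univ_pi_nonempty_iff]
  constructor
  · intro h
    constructor
    · intro k hk
      have := h k
      rw [if_neg hk, Icc_inter_Ioo_nonempty (hcd k) (hab k)] at this
      exact ⟨by exact_mod_cast this.1, by exact_mod_cast this.2⟩
    · have := h i
      rw [if_pos rfl, Icc_inter_Ioi_nonempty (hcd i)] at this
      exact_mod_cast this
  · rintro ⟨hov, hii⟩ k
    by_cases hk : k = i
    · subst hk
      rw [if_pos rfl, Icc_inter_Ioi_nonempty (hcd k)]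
      exact_mod_cast hii
    · rw [if_neg hk, Icc_inter_Ioo_nonempty (hcd k) (hab k)]
      have := hov k hk
      exact ⟨by exact_mod_cast this.1, by exact_mod_cast this.2⟩

lemma shadeNE_neg (i : Fin 3) {d0 d1} (h0 : Adj d0) (h1 : Adj d1) :
    (dominoSet d1 ∩ shade (-Pi.single i 1) (dominoSet d0)).Nonempty ↔
      ov i d0 d1 ∧ dlo d1 i < dlo d0 i := by
  have hab : ∀ k, ((dlo d0 k : ℝ)) < ((dhi d0 k : ℝ)) := fun k => by
    exact_mod_cast dlo_lt_dhi d0 k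
  have hcd : ∀ k, ((dlo d1 k : ℝ)) < ((dhi d1 k : ℝ)) := fun k => by
    exact_mod_cast dlo_lt_dhi d1 k
  rw [dominoSet_eq_pi h1, dominoSet_eq_pi h0, shade_box_neg i _ _ hab,
    ← Set.pi_inter_distrib, Set.univ_pi_nonempty_iff]
  constructor
  · intro h
    constructor
    · intro k hk
      have := h k
      rw [if_neg hk, Icc_inter_Ioo_nonempty (hcd k) (hab k)] at this
      exact ⟨by exact_mod_cast this.1, by exact_mod_cast this.2⟩
    · have := h i
      rw [if_pos rfl, Icc_inter_Iio_nonempty (hcd i)] at this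
      exact_mod_cast this
  · rintro ⟨hov, hii⟩ k
    by_cases hk : k = i
    · subst hk
      rw [if_pos rfl, Icc_inter_Iio_nonempty (hcd k)]
      exact_mod_cast hii
    · rw [if_neg hk, Icc_inter_Ioo_nonempty (hcd k) (hab k)]
      have := hov k hk
      exact ⟨by exact_mod_cast this.1, by exact_mod_cast this.2⟩

lemma reflCell_apply (j : Fin 3) (x : Fin 3 → ℤ) (k : Fin 3) :
    reflCell j x k = if k = j then -(x j) - 1 else x k :=
  Function.update_apply x j _ k

lemma reflCell_invol (j : Fin 3) (x : Fin 3 → ℤ) : reflCell j (reflCell j x) = x := by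
  funext k
  simp only [reflCell_apply]
  by_cases hk : k = j
  · subst hk; simp only [eq_self_iff_true, if_true]; omega
  · simp only [if_neg hk]

lemma reflDomino_invol (j : Fin 3) (d : (Fin 3 → ℤ) × (Fin 3 → ℤ)) :
    reflDomino j (reflDomino j d) = d := by
  unfold reflDomino
  simp [reflCell_invol]

lemma adj_refl {j : Fin 3} {d : (Fin 3 → ℤ) × (Fin 3 → ℤ)} (hd : Adj d) :
    Adj (reflDomino j d) := by
  have key : ∀ k, |(reflDomino j d).1 k - (reflDomino j d).2 k| = |d.1 k - d.2 k| := by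
    intro k
    show |reflCell j d.2 k - reflCell j d.1 k| = _
    simp only [reflCell_apply]
    by_cases hk : k = j
    · subst hk
      simp only [eq_self_iff_true, if_true]
      rw [show -d.2 k - 1 - (-d.1 k - 1) = d.1 k - d.2 k from by ring]
    · simp only [if_neg hk]
      exact abs_sub_comm _ _
  unfold Adj at hd ⊢
  rw [Finset.sum_congr rfl fun k _ => key k]
  exact hd

lemma dlo_refl (j : Fin 3) (d : (Fin 3 → ℤ) × (Fin 3 → ℤ)) (k : Fin 3) :
    dlo (reflDomino j d) k = if k = j then -(dhi d j) else dlo d k := by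
  show min (reflCell j d.2 k) (reflCell j d.1 k) = _
  simp only [reflCell_apply]
  by_cases hk : k = j
  · subst hk; simp only [eq_self_iff_true, if_true]; unfold dhi; omega
  · simp only [if_neg hk]; unfold dlo; omega

lemma dhi_refl (j : Fin 3) (d : (Fin 3 → ℤ) × (Fin 3 → ℤ)) (k : Fin 3) :
    dhi (reflDomino j d) k = if k = j then -(dlo d j) else dhi d k := by
  show max (reflCell j d.2 k) (reflCell j d.1 k) + 1 = _
  simp only [reflCell_apply]
  by_cases hk : k = j
  · subst hk; simp only [eq_self_iff_true, if_true]; unfold dlo; omega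
  · simp only [if_neg hk]; unfold dhi; omega

/-- reflected coordinatewise vector map -/
def rv (j : Fin 3) (a : Fin 3 → ℝ) : Fin 3 → ℝ := fun k => if k = j then a k else -(a k)

lemma vvec_refl (j : Fin 3) (d : (Fin 3 → ℤ) × (Fin 3 → ℤ)) :
    vvec (reflDomino j d) = rv j (vvec d) := by
  funext k
  show (reflCell j d.1 k : ℝ) - (reflCell j d.2 k : ℝ) = _
  simp only [reflCell_apply]
  unfold rv vvec
  by_cases hk : k = j
  · subst hk; simp only [eq_self_iff_true, if_true]; push_cast; ring
  · simp only [if_neg hk]; push_cast; ring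

lemma det_rv (j : Fin 3) (a b c : Fin 3 → ℝ) :
    (Matrix.of ![rv j a, rv j b, c]).det = (Matrix.of ![a, b, rv j c]).det := by
  fin_cases j <;> simp [rv, Matrix.det_fin_three] <;> ring

lemma det_neg_third (a b c : Fin 3 → ℝ) :
    (Matrix.of ![a, b, -c]).det = -(Matrix.of ![a, b, c]).det := by
  simp [Matrix.det_fin_three]; ring

lemma det_swap12 (a b c : Fin 3 → ℝ) :
    (Matrix.of ![a, b, c]).det = -(Matrix.of ![b, a, c]).det := by
  simp [Matrix.det_fin_three]; ring

lemma rv_single_self (j : Fin 3) : rv j (Pi.single j (1:ℝ)) = Pi.single j 1 := by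
  funext k
  simp only [rv]
  by_cases hk : k = j
  · rw [if_pos hk]
  · rw [if_neg hk]
    have h0 : (Pi.single j 1 : Fin 3 → ℝ) k = (0:ℝ) := by
      rw [Pi.single_apply, if_neg hk]
    rw [h0, neg_zero]

lemma rv_neg (j : Fin 3) (u : Fin 3 → ℝ) : rv j (-u) = -(rv j u) := by
  funext k
  simp only [rv, Pi.neg_apply]
  by_cases hk : k = j
  · rw [if_pos hk, if_pos hk]
  · rw [if_neg hk, if_neg hk, neg_neg]

lemma rv_single_perp {i j : Fin 3} (hij : i ≠ j) :
    rv j (Pi.single i (1:ℝ)) = -Pi.single i 1 := by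
  funext k
  simp only [rv, Pi.neg_apply]
  by_cases hk : k = j
  · rw [if_pos hk]
    have h0 : (Pi.single i 1 : Fin 3 → ℝ) k = (0:ℝ) := by
      rw [Pi.single_apply, if_neg (fun h : k = i => hij (h ▸ hk ▸ rfl))]
    rw [h0, neg_zero]
  · rw [if_neg hk]

lemma effect_eq_helper {u u' : Fin 3 → ℝ} {A B C D : (Fin 3 → ℤ) × (Fin 3 → ℤ)}
    (hcond : (dominoSet B ∩ shade u (dominoSet A)).Nonempty ↔
      (dominoSet D ∩ shade u' (dominoSet C)).Nonempty)
    (hdet : (Matrix.of ![vvec B, vvec A, u]).det = -(Matrix.of ![vvec D, vvec C, u']).det) :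
    effect u A B = - effect u' C D := by
  unfold effect
  by_cases h : (dominoSet D ∩ shade u' (dominoSet C)).Nonempty
  · rw [if_pos (hcond.mpr h), if_pos h, hdet]; ring
  · rw [if_neg (fun hh => h (hcond.mp hh)), if_neg h, neg_zero]

lemma tiling_disjoint {R : Finset (Fin 3 → ℤ)} {t : Finset ((Fin 3 → ℤ) × (Fin 3 → ℤ))}
    (ht : IsTiling R t) {d0 d1} (h0 : d0 ∈ t) (h1 : d1 ∈ t) (hne : d0 ≠ d1)
    (hov : ∀ k, dlo d0 k < dhi d1 k ∧ dlo d1 k < dhi d0 k) : False := by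
  set m : Fin 3 → ℤ := fun k => max (dlo d0 k) (dlo d1 k) with hm
  have hm0 : m = d0.1 ∨ m = d0.2 := by
    apply cell_of_between (ht.1 d0 h0).1.1
    intro k
    exact ⟨le_max_left _ _, max_lt (dlo_lt_dhi d0 k) (hov k).2⟩
  have hm1 : m = d1.1 ∨ m = d1.2 := by
    apply cell_of_between (ht.1 d1 h1).1.1
    intro k
    refine ⟨le_max_right _ _, max_lt ?_ (dlo_lt_dhi d1 k)⟩
    exact (hov k).1
  have hmR : m ∈ R := by
    rcases hm0 with h | h
    · rw [h]; exact (ht.1 d0 h0).2.1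
    · rw [h]; exact (ht.1 d0 h0).2.2
  obtain ⟨d, _, hun⟩ := ht.2 m hmR
  have e0 : d0 = d := hun d0 ⟨h0, hm0⟩
  have e1 : d1 = d := hun d1 ⟨h1, hm1⟩
  exact hne (e0.trans e1.symm)

lemma ov_refl_imp {i j : Fin 3} {d0 d1 : (Fin 3 → ℤ) × (Fin 3 → ℤ)} (h : ov i d0 d1) :
    ov i (reflDomino j d0) (reflDomino j d1) := by
  intro k hk
  rw [dlo_refl j d0 k, dlo_refl j d1 k, dhi_refl j d1 k, dhi_refl j d0 k]
  by_cases hkj : k = j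
  · subst hkj
    simp only [eq_self_iff_true, if_true]
    have := h k hk
    omega
  · simp only [if_neg hkj]
    exact h k hk

lemma ov_refl (i j : Fin 3) (d0 d1 : (Fin 3 → ℤ) × (Fin 3 → ℤ)) :
    ov i (reflDomino j d0) (reflDomino j d1) ↔ ov i d0 d1 := by
  constructor
  · intro h
    have := ov_refl_imp (j := j) h
    rwa [reflDomino_invol, reflDomino_invol] at this
  · exact ov_refl_imp

lemma key_perp {d0 d1 : (Fin 3 → ℤ) × (Fin 3 → ℤ)} (h0 : Adj d0) (h1 : Adj d1)
    {i j : Fin 3} (hij : i ≠ j) {u : Fin 3 → ℝ}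
    (hui : u = Pi.single i 1 ∨ u = -Pi.single i 1) :
    effect u (reflDomino j d0) (reflDomino j d1) = - effect u d0 d1 := by
  rcases hui with rfl | rfl
  · apply effect_eq_helper
    · rw [shadeNE_pos i (adj_refl h0) (adj_refl h1), shadeNE_pos i h0 h1, ov_refl]
      have e0 : dhi (reflDomino j d0) i = dhi d0 i := by rw [dhi_refl, if_neg hij]
      have e1 : dhi (reflDomino j d1) i = dhi d1 i := by rw [dhi_refl, if_neg hij]
      rw [e0, e1]
    · rw [vvec_refl, vvec_refl, det_rv, rv_single_perp hij, det_neg_third]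
  · apply effect_eq_helper
    · rw [shadeNE_neg i (adj_refl h0) (adj_refl h1), shadeNE_neg i h0 h1, ov_refl]
      have e0 : dlo (reflDomino j d0) i = dlo d0 i := by rw [dlo_refl, if_neg hij]
      have e1 : dlo (reflDomino j d1) i = dlo d1 i := by rw [dlo_refl, if_neg hij]
      rw [e0, e1]
    · rw [vvec_refl, vvec_refl, det_rv, rv_neg, rv_single_perp hij, neg_neg,
        det_neg_third, neg_neg]

lemma key_par {R : Finset (Fin 3 → ℤ)} {t : Finset ((Fin 3 → ℤ) × (Fin 3 → ℤ))}
    (ht : IsTiling R t) {x y : (Fin 3 → ℤ) × (Fin 3 → ℤ)} (hx : x ∈ t) (hy : y ∈ t)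
    (j : Fin 3) {u : Fin 3 → ℝ} (hui : u = Pi.single j 1 ∨ u = -Pi.single j 1) :
    effect u (reflDomino j y) (reflDomino j x) = - effect u x y := by
  have hax : Adj x := (ht.1 x hx).1.1
  have hay : Adj y := (ht.1 y hy).1.1
  have hr : rv j u = u := by
    rcases hui with rfl | rfl
    · exact rv_single_self j
    · rw [rv_neg, rv_single_self]
  have hdet : (Matrix.of ![vvec (reflDomino j x), vvec (reflDomino j y), u]).det
      = -(Matrix.of ![vvec y, vvec x, u]).det := by
    rw [vvec_refl, vvec_refl, det_rv, hr, det_swap12]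
  apply effect_eq_helper _ hdet
  by_cases hxy : x = y
  · subst hxy
    rcases hui with rfl | rfl
    · rw [shadeNE_pos j (adj_refl hay) (adj_refl hay), shadeNE_pos j hay hay]
      constructor <;> rintro ⟨_, h⟩ <;> exact absurd h (lt_irrefl _)
    · rw [shadeNE_neg j (adj_refl hay) (adj_refl hay), shadeNE_neg j hay hay]
      constructor <;> rintro ⟨_, h⟩ <;> exact absurd h (lt_irrefl _)
  · have hdisj : ¬ ∀ k, dlo x k < dhi y k ∧ dlo y k < dhi x k :=
      fun hov => tiling_disjoint ht hx hy hxy hov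
    have step : ov j x y → (dhi y j ≤ dlo x j ∨ dhi x j ≤ dlo y j) := by
      intro hov'
      by_contra hcon
      push_neg at hcon
      apply hdisj
      intro k
      by_cases hk : k = j
      · subst hk; exact ⟨hcon.1, hcon.2⟩
      · exact hov' k hk
    rcases hui with rfl | rfl
    · rw [shadeNE_pos j (adj_refl hay) (adj_refl hax), shadeNE_pos j hax hay, ov_refl,
        dhi_refl, dhi_refl, if_pos rfl, if_pos rfl]
      constructor
      · rintro ⟨hov, hlt⟩
        have hov' := ov_symm.mp hov
        have hj := step hov'
        have l1 := dlo_lt_dhi x j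
        have l2 := dlo_lt_dhi y j
        exact ⟨hov', by omega⟩
      · rintro ⟨hov', hlt⟩
        have hj := step hov'
        have l1 := dlo_lt_dhi x j
        have l2 := dlo_lt_dhi y j
        exact ⟨ov_symm.mpr hov', by omega⟩
    · rw [shadeNE_neg j (adj_refl hay) (adj_refl hax), shadeNE_neg j hax hay, ov_refl,
        dlo_refl, dlo_refl, if_pos rfl, if_pos rfl]
      constructor
      · rintro ⟨hov, hlt⟩
        have hov' := ov_symm.mp hov
        have hj := step hov'
        have l1 := dlo_lt_dhi x j
        have l2 := dlo_lt_dhi y j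
        exact ⟨hov', by omega⟩
      · rintro ⟨hov', hlt⟩
        have hj := step hov'
        have l1 := dlo_lt_dhi x j
        have l2 := dlo_lt_dhi y j
        exact ⟨ov_symm.mpr hov', by omega⟩


/-- Let `r` be the reflection of `ℝ³` in a coordinate plane
(`p ↦ p − 2(p·w)w` for a unit coordinate vector `w = e_j`).  For any tiling `t` of a
region `R` and any `u ∈ {±e_x, ±e_y, ±e_z}`, the pretwist of the reflected tiling
satisfies `T^u(r(t)) = −T^u(t)`. -/
theorem pretwist_reflect (R : Finset (Fin 3 → ℤ)) (t : Finset ((Fin 3 → ℤ) × (Fin 3 → ℤ)))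
    (ht : IsTiling R t) (j : Fin 3) (u : Fin 3 → ℝ)
    (hu : ∃ i : Fin 3, u = Pi.single i 1 ∨ u = -Pi.single i 1) :
    pretwist u (t.image (reflDomino j)) = - pretwist u t := by
  obtain ⟨i, hui⟩ := hu
  have hadj : ∀ d ∈ t, Adj d := fun d hd => (ht.1 d hd).1.1
  have hinj : ∀ x ∈ t, ∀ y ∈ t, reflDomino j x = reflDomino j y → x = y := by
    intro a _ b _ h
    have := congrArg (reflDomino j) h
    rwa [reflDomino_invol, reflDomino_invol] at this
  have hsum : pretwist u (t.image (reflDomino j)) =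
      ∑ d0 ∈ t, ∑ d1 ∈ t, effect u (reflDomino j d0) (reflDomino j d1) := by
    unfold pretwist
    rw [Finset.sum_image hinj]
    exact Finset.sum_congr rfl fun d0 _ => Finset.sum_image hinj
  rw [hsum]
  have hneg : - pretwist u t = ∑ d0 ∈ t, ∑ d1 ∈ t, -(effect u d0 d1) := by
    unfold pretwist
    simp [Finset.sum_neg_distrib]
  rw [hneg]
  by_cases hij : i = j
  · subst hij
    rw [Finset.sum_comm]
    refine Finset.sum_congr rfl fun a ha => Finset.sum_congr rfl fun b hb => ?_
    exact key_par ht ha hb i hui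
  · refine Finset.sum_congr rfl fun a ha => Finset.sum_congr rfl fun b hb => ?_
    rw [key_perp (hadj a ha) (hadj b hb) hij hui]

end
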